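/- arXiv:1408.3661 — 7 statements merged into one kernel-verified Lean document; each statement's English description precedes it below -/
import Mathlib

section
/- For any probability vector (p_1,...,p_L) with p_i > 0 summing to 1, the quantity sum_{i=1}^{L-1} (p_i + p_{i+1}) * h2(p_i/(p_i+p_{i+1})) is at most 2, where h2 is the binary entropy function. -/
/-- The binary entropy function (base 2). -/
noncomputable def h2 (x : ℝ) : ℝ := -(x * Real.logb 2 x) - (1 - x) * Real.logb 2 (1 - x)

lemma h2_le_one (x : ℝ) : h2 x ≤ 1 := by
  have h := Real.binEntropy_le_log_two (p := x)
  have hlog : (0:ℝ) < Real.log 2 := Real.log_pos (by norm_num)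
  have : h2 x = Real.binEntropy x / Real.log 2 := by
    unfold h2 Real.binEntropy Real.logb
    rw [Real.log_inv, Real.log_inv]
    ring
  rw [this, div_le_one hlog]
  exact h

/-- For any probability vector `(p_0, …, p_{L-1})` with positive entries summing to one,
`∑_{i=0}^{L-2} (p_i + p_{i+1}) h2(p_i/(p_i+p_{i+1})) ≤ 2`. -/
theorem sum_pair_binEntropy_le_two (L : ℕ) (p : ℕ → ℝ)
    (hpos : ∀ i < L, 0 < p i)
    (hsum : ∑ i ∈ Finset.range L, p i = 1) :
    ∑ i ∈ Finset.range (L - 1), (p i + p (i + 1)) * h2 (p i / (p i + p (i + 1))) ≤ 2 := by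
  have step1 : ∑ i ∈ Finset.range (L - 1), (p i + p (i + 1)) * h2 (p i / (p i + p (i + 1)))
      ≤ ∑ i ∈ Finset.range (L - 1), (p i + p (i + 1)) := by
    apply Finset.sum_le_sum
    intro i hi
    have hiL : i < L - 1 := Finset.mem_range.mp hi
    have h1 : 0 < p i := hpos i (by omega)
    have h2' : 0 < p (i + 1) := hpos (i + 1) (by omega)
    calc (p i + p (i + 1)) * h2 (p i / (p i + p (i + 1)))
        ≤ (p i + p (i + 1)) * 1 :=
          mul_le_mul_of_nonneg_left (h2_le_one _) (by linarith)
      _ = p i + p (i + 1) := mul_one _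
  have hnn : ∀ i ∈ Finset.range L, 0 ≤ p i := fun i hi =>
    (hpos i (Finset.mem_range.mp hi)).le
  have sub1 : ∑ i ∈ Finset.range (L - 1), p i ≤ 1 := by
    rw [← hsum]
    exact Finset.sum_le_sum_of_subset_of_nonneg
      (Finset.range_subset_range.mpr (by omega)) (fun i hi _ => hnn i hi)
  have sub2 : ∑ i ∈ Finset.range (L - 1), p (i + 1) ≤ 1 := by
    rw [← hsum]
    have : ∑ i ∈ Finset.range (L - 1), p (i + 1)
        = ∑ i ∈ Finset.Ico 1 L, p i := by
      rw [Finset.sum_Ico_eq_sum_range]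
      apply Finset.sum_congr (by congr 1)
      intro i _; rw [add_comm]
    rw [this]
    exact Finset.sum_le_sum_of_subset_of_nonneg
      (by intro x hx; simp at hx ⊢; omega) (fun i hi _ => hnn i hi)
  calc ∑ i ∈ Finset.range (L - 1), (p i + p (i + 1)) * h2 (p i / (p i + p (i + 1)))
      ≤ ∑ i ∈ Finset.range (L - 1), (p i + p (i + 1)) := step1
    _ = (∑ i ∈ Finset.range (L - 1), p i) + ∑ i ∈ Finset.range (L - 1), p (i + 1) :=
        Finset.sum_add_distrib
    _ ≤ 2 := by linarith
end

section
/- If f: X^N -> {1,...,N} is a candidate argmax function (i.e., f(x) is always an index attaining the maximum coordinate of x), then for every user index i and for any three distinct values alpha < gamma < beta in X, there exists an input assignment of the other coordinates such that f differs when coordinate i equals alpha versus beta; consequently no three vertices can form an independent set in the characteristic graph of any user. -/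
/-- `f` is a candidate argmax function: `f x` is always an index attaining the
maximum coordinate of `x`. -/
def IsArgmaxFun {N L : ℕ} (f : (Fin N → Fin L) → Fin N) : Prop :=
  ∀ x : Fin N → Fin L, ∀ j : Fin N, x j ≤ x (f x)

/-- For a candidate argmax function, any user `i`, and any three values `a < g < b`,
there exists an assignment of the other coordinates on which `f` differs when
coordinate `i` equals `a` versus `b`; hence no three vertices form an independent set
in the characteristic graph of user `i`. -/
theorem no_three_independent {N L : ℕ} (hN : 2 ≤ N)
    (f : (Fin N → Fin L) → Fin N) (hf : IsArgmaxFun f)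
    (i : Fin N) (a g b : Fin L) (hag : a < g) (hgb : g < b) :
    ∃ y : Fin N → Fin L,
      f (Function.update y i a) ≠ f (Function.update y i b) := by
  refine ⟨fun _ => g, ?_⟩
  set xa := Function.update (fun _ : Fin N => g) i a with hxa
  set xb := Function.update (fun _ : Fin N => g) i b with hxb
  -- f xb = i
  have hfb : f xb = i := by
    by_contra h
    have h1 : xb i ≤ xb (f xb) := hf xb i
    rw [hxb] at h1
    simp [Function.update_apply, show f (Function.update (fun _ : Fin N => g) i b) ≠ i from h] at h1
    exact absurd h1 (not_le.mpr hgb)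
  -- f xa ≠ i
  have hfa : f xa ≠ i := by
    -- find j ≠ i
    obtain ⟨j, hj⟩ : ∃ j : Fin N, j ≠ i := by
      exact Fintype.exists_ne_of_one_lt_card (by simp; omega) i
    intro h
    have h1 : xa j ≤ xa (f xa) := hf xa j
    rw [h, hxa] at h1
    simp [Function.update_apply, hj] at h1
    exact absurd h1 (not_le.mpr hag)
  rw [hfb]
  exact hfa
end

section
/- If f: X^N -> {1,...,N} is a candidate argmax function and there is no edge between alpha and beta in the characteristic graph of user i, then for every other user j there is an edge between alpha and beta in the characteristic graph of user j. -/
/-- Adjacency in the characteristic graph of user `i`: distinct values `a, b` are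
adjacent iff there is an assignment of the other coordinates on which `f` differs. -/
def CharAdj {N L : ℕ} (f : (Fin N → Fin L) → Fin N) (i : Fin N) (a b : Fin L) : Prop :=
  a ≠ b ∧ ∃ y : Fin N → Fin L, f (Function.update y i a) ≠ f (Function.update y i b)

lemma argmax_unique_max {N L : ℕ} (f : (Fin N → Fin L) → Fin N) (hf : IsArgmaxFun f)
    (x : Fin N → Fin L) (k : Fin N) (h : ∀ m : Fin N, m ≠ k → x m < x k) :
    f x = k := by
  by_contra hne
  exact absurd (hf x k) (not_le.mpr (h (f x) hne))

lemma edge_aux {N L : ℕ} (f : (Fin N → Fin L) → Fin N) (hf : IsArgmaxFun f)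
    (i j : Fin N) (hj : j ≠ i) (a b : Fin L) (hlt : a < b)
    (heq : ∀ y, f (Function.update y i a) = f (Function.update y i b)) :
    ∃ y, f (Function.update y j a) ≠ f (Function.update y j b) := by
  set u : Fin N → Fin L := Function.update (fun _ => a) i b with hu_def
  have hui : u i = b := Function.update_self _ _ _
  have huk : ∀ k, k ≠ i → u k = a := fun k hk => Function.update_of_ne hk _ _
  have hu : f u = i := by
    apply argmax_unique_max f hf
    intro m hm
    rw [huk m hm, hui]; exact hlt
  set v : Fin N → Fin L := Function.update u j b with hv_def
  have hvi : v i = b := by rw [hv_def, Function.update_of_ne (Ne.symm hj), hui]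
  have hv : f v = j := by
    have h1 : Function.update v i b = v := by
      rw [← hvi]; exact Function.update_eq_self _ _
    have h2 := heq v
    rw [h1] at h2
    rw [← h2]
    apply argmax_unique_max f hf
    intro m hm
    have hmj : Function.update v i a j = b := by
      rw [Function.update_of_ne hj, hv_def, Function.update_self]
    rw [hmj]
    rcases eq_or_ne m i with rfl | hmi
    · rw [Function.update_self]; exact hlt
    · rw [Function.update_of_ne hmi, hv_def, Function.update_of_ne hm, huk m hmi]
      exact hlt
  refine ⟨u, ?_⟩
  have h3 : Function.update u j a = u := by
    rw [show a = u j from (huk j hj).symm]; exact Function.update_eq_self _ _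
  rw [h3, hu, ← hv_def, hv]
  exact hj.symm

/-- If `a` and `b` are not adjacent in user `i`'s characteristic graph, then they are
adjacent in every other user's characteristic graph. -/
theorem edge_elsewhere {N L : ℕ} (hN : 2 ≤ N)
    (f : (Fin N → Fin L) → Fin N) (hf : IsArgmaxFun f)
    (i : Fin N) (a b : Fin L) (hab : a ≠ b) (hno : ¬ CharAdj f i a b) :
    ∀ j : Fin N, j ≠ i → CharAdj f j a b := by
  intro j hj
  have heq : ∀ y, f (Function.update y i a) = f (Function.update y i b) := by
    intro y
    by_contra h
    exact hno ⟨hab, y, h⟩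
  refine ⟨hab, ?_⟩
  rcases lt_or_gt_of_ne hab with hlt | hlt
  · exact edge_aux f hf i j hj a b hlt heq
  · obtain ⟨y, hy⟩ := edge_aux f hf i j hj b a hlt (fun y => (heq y).symm)
    exact ⟨y, hy.symm⟩
end

section
/- Let N users each take values in {alpha_1,...,alpha_L} with min alpha_1 > 0. Any function f: X^N -> X achieving zero expected distortion under the max-distortion measure must equal the max function exactly, and consequently the characteristic graph of every user with respect to f is the complete graph on L vertices. -/
/-- Adjacency in the characteristic graph of user `n` for an `X`-valued function. -/
def CharAdjV {N L : ℕ} (f : (Fin N → Fin L) → Fin L) (n : Fin N) (a b : Fin L) : Prop :=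
  a ≠ b ∧ ∃ y : Fin N → Fin L, f (Function.update y n a) ≠ f (Function.update y n b)

/-- With `N+1` users taking values `α 0 < … < α L` with `α 0 > 0` and a full-support
product distribution, any function achieving zero expected distortion under the
max-distortion measure equals the max function exactly, and consequently every user's
characteristic graph is complete. -/
theorem max_zero_distortion_complete (N L : ℕ) (α : Fin (L + 1) → ℝ)
    (hmono : StrictMono α) (hpos : 0 < α 0)
    (p : Fin (L + 1) → ℝ) (hp : ∀ i, 0 < p i) (hsum : ∑ i, p i = 1)
    (f : (Fin (N + 1) → Fin (L + 1)) → Fin (L + 1))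
    (hzero : ∑ x : Fin (N + 1) → Fin (L + 1), (∏ i, p (x i)) *
        (if α (f x) ≤ α (Finset.univ.sup' Finset.univ_nonempty x)
          then α (Finset.univ.sup' Finset.univ_nonempty x) - α (f x)
          else α (Finset.univ.sup' Finset.univ_nonempty x)) = 0) :
    (∀ x : Fin (N + 1) → Fin (L + 1), f x = Finset.univ.sup' Finset.univ_nonempty x) ∧
    (∀ n : Fin (N + 1), ∀ a b : Fin (L + 1), a ≠ b → CharAdjV f n a b) := by
  have hα0 : ∀ i : Fin (L + 1), 0 < α i := fun i =>
    lt_of_lt_of_le hpos (hmono.monotone (Fin.zero_le i))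
  have hfe : ∀ x : Fin (N + 1) → Fin (L + 1),
      f x = Finset.univ.sup' Finset.univ_nonempty x := by
    intro x
    have hterm : ∀ y ∈ (Finset.univ : Finset (Fin (N + 1) → Fin (L + 1))),
        0 ≤ (∏ i, p (y i)) *
          (if α (f y) ≤ α (Finset.univ.sup' Finset.univ_nonempty y)
            then α (Finset.univ.sup' Finset.univ_nonempty y) - α (f y)
            else α (Finset.univ.sup' Finset.univ_nonempty y)) := by
      intro y _
      refine mul_nonneg (Finset.prod_nonneg fun i _ => (hp _).le) ?_
      split
      · linarith
      · exact (hα0 _).le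
    have hx := (Finset.sum_eq_zero_iff_of_nonneg hterm).mp hzero x (Finset.mem_univ x)
    have hpprod : 0 < ∏ i, p (x i) := Finset.prod_pos fun i _ => hp _
    have hd : (if α (f x) ≤ α (Finset.univ.sup' Finset.univ_nonempty x)
        then α (Finset.univ.sup' Finset.univ_nonempty x) - α (f x)
        else α (Finset.univ.sup' Finset.univ_nonempty x)) = 0 := by
      rcases mul_eq_zero.mp hx with h | h
      · exact absurd h hpprod.ne'
      · exact h
    by_cases hle : α (f x) ≤ α (Finset.univ.sup' Finset.univ_nonempty x)
    · rw [if_pos hle] at hd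
      exact hmono.injective (by linarith)
    · rw [if_neg hle] at hd
      exact absurd hd (hα0 _).ne'
  refine ⟨hfe, fun n a b hab => ⟨hab, ⟨fun _ => 0, ?_⟩⟩⟩
  rw [hfe, hfe]
  have key : ∀ c : Fin (L + 1),
      Finset.univ.sup' Finset.univ_nonempty (Function.update (fun _ : Fin (N + 1) => (0 : Fin (L + 1))) n c) = c := by
    intro c
    refine le_antisymm (Finset.sup'_le _ _ fun i _ => ?_) ?_
    · rcases eq_or_ne i n with rfl | hne
      · simp
      · simp [Function.update_of_ne hne, Fin.zero_le]
    · have := Finset.le_sup' (f := Function.update (fun _ : Fin (N + 1) => (0 : Fin (L + 1))) n c)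
        (Finset.mem_univ n)
      simpa only [Function.update_self] using this
  rw [key a, key b]
  exact hab
end

section
/- With the same setup, for N users the partial derivative of E[X_{Z_hat}] with respect to the interior decision boundary l_k equals f(l_k) * [ (F_{k+1}^N - F_k^N)(E_{k+1} - l_k)/p_{k+1} + (F_k^N - F_{k-1}^N)(l_k - E_k)/p_k - N F_k^{N-1} (E_{k+1} - E_k) ], where F_j = F(l_j), p_j = F_j - F_{j-1}, and E_j = E[X | l_{j-1} <= X <= l_j]. -/
/-- Conditional mean `E[X | a ≤ X ≤ b]` for a source with density `fpdf` and CDF `F`. -/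
noncomputable def condMean (fpdf F : ℝ → ℝ) (a b : ℝ) : ℝ :=
  (∫ x in a..b, x * fpdf x) / (F b - F a)

/-- Derivative of the expected selected value `∑_j E_j (F_j^N − F_{j-1}^N)` of the
homogeneous scalar quantizer, with respect to an interior decision boundary `ℓ k`:
it equals
`f(ℓ_k) [ (F_{k+1}^N − F_k^N)(E_{k+1} − ℓ_k)/p_{k+1}
        + (F_k^N − F_{k-1}^N)(ℓ_k − E_k)/p_k − N F_k^{N-1}(E_{k+1} − E_k)]`. -/
theorem deriv_expected_argmax_value
    (N K k : ℕ) (F fpdf : ℝ → ℝ) (ℓ : ℕ → ℝ)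
    (hF : ∀ x, HasDerivAt F (fpdf x) x) (hfc : Continuous fpdf)
    (hmono : ∀ j < K, ℓ j < ℓ (j + 1))
    (hpos : ∀ j, 1 ≤ j → j ≤ K → F (ℓ (j - 1)) < F (ℓ j))
    (hk1 : 1 ≤ k) (hkK : k < K) :
    HasDerivAt
      (fun t => ∑ j ∈ Finset.Icc 1 K,
        ((∫ x in (if j - 1 = k then t else ℓ (j - 1))..(if j = k then t else ℓ j),
            x * fpdf x) /
          (F (if j = k then t else ℓ j) - F (if j - 1 = k then t else ℓ (j - 1)))) *
        ((F (if j = k then t else ℓ j)) ^ N -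
          (F (if j - 1 = k then t else ℓ (j - 1))) ^ N))
      (fpdf (ℓ k) *
        (((F (ℓ (k + 1))) ^ N - (F (ℓ k)) ^ N) *
            (condMean fpdf F (ℓ k) (ℓ (k + 1)) - ℓ k) / (F (ℓ (k + 1)) - F (ℓ k)) +
          ((F (ℓ k)) ^ N - (F (ℓ (k - 1))) ^ N) *
            (ℓ k - condMean fpdf F (ℓ (k - 1)) (ℓ k)) / (F (ℓ k) - F (ℓ (k - 1))) -
          (N : ℝ) * (F (ℓ k)) ^ (N - 1) *
            (condMean fpdf F (ℓ k) (ℓ (k + 1)) - condMean fpdf F (ℓ (k - 1)) (ℓ k))))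
      (ℓ k) := by
  set a := ℓ (k - 1) with ha
  set b := ℓ k with hb
  set c := ℓ (k + 1) with hc
  have hab : F a < F b := hpos k hk1 hkK.le
  have hbc : F b < F c := by
    have := hpos (k + 1) (by omega) (by omega)
    simpa using this
  have hab' : F b - F a ≠ 0 := sub_ne_zero.mpr (ne_of_gt hab)
  have hbc' : F c - F b ≠ 0 := sub_ne_zero.mpr (ne_of_gt hbc)
  have hcont : Continuous fun x : ℝ => x * fpdf x := continuous_id.mul hfc
  -- derivative of the two moving integrals
  have hI : HasDerivAt (fun t => ∫ x in a..t, x * fpdf x) (b * fpdf b) b :=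
    intervalIntegral.integral_hasDerivAt_right (hcont.intervalIntegrable _ _)
      (hcont.stronglyMeasurable.stronglyMeasurableAtFilter) hcont.continuousAt
  have hJ : HasDerivAt (fun t => ∫ x in t..c, x * fpdf x) (-(b * fpdf b)) b :=
    intervalIntegral.integral_hasDerivAt_left (hcont.intervalIntegrable _ _)
      (hcont.stronglyMeasurable.stronglyMeasurableAtFilter) hcont.continuousAt
  have hFb : HasDerivAt F (fpdf b) b := hF b
  have hPow : HasDerivAt (fun t => (F t) ^ N) ((N : ℝ) * (F b) ^ (N - 1) * fpdf b) b :=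
    hFb.pow N
  -- term k
  have hA : HasDerivAt
      (fun t => (∫ x in a..t, x * fpdf x) / (F t - F a) * ((F t) ^ N - (F a) ^ N))
      (((b * fpdf b * (F b - F a) -
          (∫ x in a..b, x * fpdf x) * fpdf b) / (F b - F a) ^ 2) *
            ((F b) ^ N - (F a) ^ N) +
        (∫ x in a..b, x * fpdf x) / (F b - F a) *
          ((N : ℝ) * (F b) ^ (N - 1) * fpdf b)) b := by
    exact (hI.div (hFb.sub_const (F a)) hab').mul (hPow.sub_const ((F a) ^ N))
  -- term k+1
  have hB : HasDerivAt
      (fun t => (∫ x in t..c, x * fpdf x) / (F c - F t) * ((F c) ^ N - (F t) ^ N))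
      (((-(b * fpdf b) * (F c - F b) -
          (∫ x in b..c, x * fpdf x) * (-(fpdf b))) / (F c - F b) ^ 2) *
            ((F c) ^ N - (F b) ^ N) +
        (∫ x in b..c, x * fpdf x) / (F c - F b) *
          (-((N : ℝ) * (F b) ^ (N - 1) * fpdf b))) b := by
    have hFc : HasDerivAt (fun t => F c - F t) (-(fpdf b)) b :=
      (hFb.const_sub (F c))
    have hPc : HasDerivAt (fun t => (F c) ^ N - (F t) ^ N)
        (-((N : ℝ) * (F b) ^ (N - 1) * fpdf b)) b := hPow.const_sub ((F c) ^ N)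
    exact (hJ.div hFc hbc').mul hPc
  -- the remaining (constant) terms
  set s : Finset ℕ := ((Finset.Icc 1 K).erase k).erase (k + 1) with hs
  set C : ℝ := ∑ j ∈ s,
      ((∫ x in ℓ (j - 1)..ℓ j, x * fpdf x) / (F (ℓ j) - F (ℓ (j - 1)))) *
        ((F (ℓ j)) ^ N - (F (ℓ (j - 1))) ^ N) with hC
  have hk_mem : k ∈ Finset.Icc 1 K := Finset.mem_Icc.mpr ⟨hk1, hkK.le⟩
  have hk1_mem : k + 1 ∈ (Finset.Icc 1 K).erase k := by
    refine Finset.mem_erase.mpr ⟨by omega, Finset.mem_Icc.mpr ⟨by omega, by omega⟩⟩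
  have hfun : (fun t => ∑ j ∈ Finset.Icc 1 K,
        ((∫ x in (if j - 1 = k then t else ℓ (j - 1))..(if j = k then t else ℓ j),
            x * fpdf x) /
          (F (if j = k then t else ℓ j) - F (if j - 1 = k then t else ℓ (j - 1)))) *
        ((F (if j = k then t else ℓ j)) ^ N -
          (F (if j - 1 = k then t else ℓ (j - 1))) ^ N))
      = fun t =>
        ((∫ x in a..t, x * fpdf x) / (F t - F a) * ((F t) ^ N - (F a) ^ N) +
         (∫ x in t..c, x * fpdf x) / (F c - F t) * ((F c) ^ N - (F t) ^ N)) + C := by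
    funext t
    rw [← Finset.add_sum_erase _ _ hk_mem, ← Finset.add_sum_erase _ _ hk1_mem]
    have h1 : ¬ (k - 1 = k) := by omega
    have h2 : ¬ (k + 1 = k) := by omega
    have h3 : (k + 1) - 1 = k := by omega
    rw [if_pos rfl, if_neg h1, if_neg h2, h3, if_pos rfl]
    have hrest : ∑ j ∈ ((Finset.Icc 1 K).erase k).erase (k + 1),
        ((∫ x in (if j - 1 = k then t else ℓ (j - 1))..(if j = k then t else ℓ j),
            x * fpdf x) /
          (F (if j = k then t else ℓ j) - F (if j - 1 = k then t else ℓ (j - 1)))) *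
        ((F (if j = k then t else ℓ j)) ^ N -
          (F (if j - 1 = k then t else ℓ (j - 1))) ^ N) = C := by
      refine Finset.sum_congr rfl fun j hj => ?_
      have hj1 : j ≠ k + 1 := (Finset.mem_erase.mp hj).1
      have hj2 : j ≠ k := (Finset.mem_erase.mp (Finset.mem_erase.mp hj).2).1
      have hj3 : 1 ≤ j := (Finset.mem_Icc.mp
        (Finset.mem_erase.mp (Finset.mem_erase.mp hj).2).2).1
      have h4 : ¬ (j - 1 = k) := by omega
      rw [if_neg hj2, if_neg h4]
    rw [hrest]
    ring
  rw [hfun]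
  have hD := (hA.add hB).add_const C
  convert hD using 1
  · rfl
  · rfl
  · rfl
  simp only [condMean]
  field_simp
  ring
end

section
/- For N = 2 i.i.d. sources with density f, the derivative of the expected estimated maximum with respect to the decision boundary l_k simplifies to f(l_k) * integral from l_{k-1} to l_{k+1} of (x - l_k) f(x) dx. -/
/-- For `N = 2` i.i.d. sources with density `fpdf` and CDF `F`, the derivative of the
expected estimated maximum `∑_j E_j (F_j² − F_{j-1}²)` with respect to the interior
decision boundary `ℓ k` equals `f(ℓ_k) ∫_{ℓ_{k-1}}^{ℓ_{k+1}} (x − ℓ_k) f(x) dx`. -/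
theorem deriv_expected_argmax_value_two_users
    (K k : ℕ) (F fpdf : ℝ → ℝ) (ℓ : ℕ → ℝ)
    (hF : ∀ x, HasDerivAt F (fpdf x) x) (hfc : Continuous fpdf)
    (hmono : ∀ j < K, ℓ j < ℓ (j + 1))
    (hpos : ∀ j, 1 ≤ j → j ≤ K → F (ℓ (j - 1)) < F (ℓ j))
    (hk1 : 1 ≤ k) (hkK : k < K) :
    HasDerivAt
      (fun t => ∑ j ∈ Finset.Icc 1 K,
        ((∫ x in (if j - 1 = k then t else ℓ (j - 1))..(if j = k then t else ℓ j),
            x * fpdf x) /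
          (F (if j = k then t else ℓ j) - F (if j - 1 = k then t else ℓ (j - 1)))) *
        ((F (if j = k then t else ℓ j)) ^ 2 -
          (F (if j - 1 = k then t else ℓ (j - 1))) ^ 2))
      (fpdf (ℓ k) * ∫ x in (ℓ (k - 1))..(ℓ (k + 1)), (x - ℓ k) * fpdf x)
      (ℓ k) := by
  have hFc : Continuous F := by
    rw [continuous_iff_continuousAt]; exact fun x => (hF x).continuousAt
  have hφ : Continuous (fun x : ℝ => x * fpdf x) := continuous_id.mul hfc
  set Dk : ℝ := (ℓ k * fpdf (ℓ k)) * (F (ℓ k) + F (ℓ (k - 1))) +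
      (∫ x in (ℓ (k - 1))..(ℓ k), x * fpdf x) * fpdf (ℓ k) with hDk
  set Dk1 : ℝ := (-(ℓ k * fpdf (ℓ k))) * (F (ℓ (k + 1)) + F (ℓ k)) +
      (∫ x in (ℓ k)..(ℓ (k + 1)), x * fpdf x) * fpdf (ℓ k) with hDk1
  have hsum : HasDerivAt
      (fun t => ∑ j ∈ Finset.Icc 1 K,
        ((∫ x in (if j - 1 = k then t else ℓ (j - 1))..(if j = k then t else ℓ j),
            x * fpdf x) /
          (F (if j = k then t else ℓ j) - F (if j - 1 = k then t else ℓ (j - 1)))) *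
        ((F (if j = k then t else ℓ j)) ^ 2 -
          (F (if j - 1 = k then t else ℓ (j - 1))) ^ 2))
      (∑ j ∈ Finset.Icc 1 K, (if j = k then Dk else if j = k + 1 then Dk1 else 0))
      (ℓ k) := by
    refine HasDerivAt.fun_sum fun j hj => ?_
    have hj1 : 1 ≤ j := (Finset.mem_Icc.mp hj).1
    by_cases hjk : j = k
    · subst hjk
      have h1 : ¬ (j - 1 = j) := by omega
      simp only [if_pos rfl, if_neg h1, ↓reduceIte]
      have hd : HasDerivAt
          (fun t => (∫ x in (ℓ (j - 1))..t, x * fpdf x) * (F t + F (ℓ (j - 1))))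
          Dk (ℓ j) := by
        have hFTC : HasDerivAt (fun t => ∫ x in (ℓ (j - 1))..t, x * fpdf x)
            (ℓ j * fpdf (ℓ j)) (ℓ j) :=
          intervalIntegral.integral_hasDerivAt_right (hφ.intervalIntegrable _ _)
            (hφ.stronglyMeasurableAtFilter _ _) hφ.continuousAt
        exact hFTC.mul ((hF (ℓ j)).add_const _)
      refine hd.congr_of_eventuallyEq ?_
      have hopen : IsOpen {t : ℝ | F (ℓ (j - 1)) < F t} :=
        isOpen_lt continuous_const hFc
      have hmem : ℓ j ∈ {t : ℝ | F (ℓ (j - 1)) < F t} := hpos j hj1 (Finset.mem_Icc.mp hj).2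
      filter_upwards [hopen.mem_nhds hmem] with t ht
      have hne : F t - F (ℓ (j - 1)) ≠ 0 := sub_ne_zero.mpr (ne_of_gt ht)
      field_simp
      ring
    · by_cases hjk1 : j = k + 1
      · subst hjk1
        have h1 : k + 1 - 1 = k := by omega
        simp only [h1, if_pos rfl, if_neg hjk, ↓reduceIte]
        have hd : HasDerivAt
            (fun t => (∫ x in t..(ℓ (k + 1)), x * fpdf x) * (F (ℓ (k + 1)) + F t))
            Dk1 (ℓ k) := by
          have hFTC : HasDerivAt (fun t => ∫ x in t..(ℓ (k + 1)), x * fpdf x)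
              (-(ℓ k * fpdf (ℓ k))) (ℓ k) :=
            intervalIntegral.integral_hasDerivAt_left (hφ.intervalIntegrable _ _)
              (hφ.stronglyMeasurableAtFilter _ _) hφ.continuousAt
          exact hFTC.mul ((hF (ℓ k)).const_add _)
        refine hd.congr_of_eventuallyEq ?_
        have hopen : IsOpen {t : ℝ | F t < F (ℓ (k + 1))} :=
          isOpen_lt hFc continuous_const
        have hmem : ℓ k ∈ {t : ℝ | F t < F (ℓ (k + 1))} := by
          have := hpos (k + 1) (by omega) (by omega)
          simpa [h1] using this
        filter_upwards [hopen.mem_nhds hmem] with t ht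
        have hne : F (ℓ (k + 1)) - F t ≠ 0 := sub_ne_zero.mpr (ne_of_gt ht)
        field_simp
        ring
      · have h2 : ¬ (j - 1 = k) := by omega
        simp only [if_neg hjk, if_neg h2, if_neg hjk1]
        exact hasDerivAt_const _ _
  have hval : (∑ j ∈ Finset.Icc 1 K, (if j = k then Dk else if j = k + 1 then Dk1 else 0))
      = fpdf (ℓ k) * ∫ x in (ℓ (k - 1))..(ℓ (k + 1)), (x - ℓ k) * fpdf x := by
    have hsplit : ∀ j, (if j = k then Dk else if j = k + 1 then Dk1 else 0) =
        (if j = k then Dk else 0) + (if j = k + 1 then Dk1 else 0) := by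
      intro j
      by_cases h : j = k
      · have hne : j ≠ k + 1 := by omega
        simp [h, hne]
      · by_cases h' : j = k + 1 <;> simp [h, h']
    rw [Finset.sum_congr rfl fun j _ => hsplit j, Finset.sum_add_distrib,
      Finset.sum_ite_eq' (Finset.Icc 1 K) k, Finset.sum_ite_eq' (Finset.Icc 1 K) (k + 1),
      if_pos (Finset.mem_Icc.mpr ⟨hk1, hkK.le⟩),
      if_pos (Finset.mem_Icc.mpr ⟨by omega, by omega⟩)]
    have hadd : (∫ x in (ℓ (k - 1))..(ℓ k), x * fpdf x) +
        (∫ x in (ℓ k)..(ℓ (k + 1)), x * fpdf x) =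
        ∫ x in (ℓ (k - 1))..(ℓ (k + 1)), x * fpdf x :=
      intervalIntegral.integral_add_adjacent_intervals (hφ.intervalIntegrable _ _)
        (hφ.intervalIntegrable _ _)
    have hFint : (∫ x in (ℓ (k - 1))..(ℓ (k + 1)), fpdf x) = F (ℓ (k + 1)) - F (ℓ (k - 1)) :=
      intervalIntegral.integral_eq_sub_of_hasDerivAt (fun x _ => hF x)
        (hfc.intervalIntegrable _ _)
    have hrhs : (∫ x in (ℓ (k - 1))..(ℓ (k + 1)), (x - ℓ k) * fpdf x) =
        (∫ x in (ℓ (k - 1))..(ℓ (k + 1)), x * fpdf x) -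
          ℓ k * (F (ℓ (k + 1)) - F (ℓ (k - 1))) := by
      rw [← hFint, ← intervalIntegral.integral_const_mul,
        ← intervalIntegral.integral_sub (hφ.intervalIntegrable _ _)
          ((hfc.intervalIntegrable _ _).const_mul _)]
      congr 1; ext x; ring
    rw [hDk, hDk1, hrhs, ← hadd]
    ring
  rw [hval] at hsum
  exact hsum
end

section
/- For the two-user argmax problem over a uniform discrete source of size L, the bisection-based interactive scheme has expected total communication R(L) satisfying R(L) <= 3 + (1/2) R(ceil(L/2)) with R(1) = 0, and therefore R(L) <= 6 - 6*(1/2)^{ceil(log2 L)} < 6 for all L >= 1. -/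
/-- The bisection-based two-user interactive argmax scheme: if `R` is nonnegative with
`R 1 = 0` and `R L ≤ 3 + (1/2) R(⌈L/2⌉)` for `L ≥ 2`, then
`R L ≤ 6 − 6 (1/2)^{⌈log₂ L⌉} < 6` for all `L ≥ 1`. -/
theorem interactive_bisection_rate_bound (R : ℕ → ℝ)
    (hnonneg : ∀ L, 1 ≤ L → 0 ≤ R L)
    (hone : R 1 = 0)
    (hrec : ∀ L, 2 ≤ L → R L ≤ 3 + (1 / 2) * R ((L + 1) / 2)) :
    ∀ L, 1 ≤ L →
      R L ≤ 6 - 6 * (1 / 2 : ℝ) ^ (Nat.clog 2 L) ∧ R L < 6 := by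
  intro L
  induction L using Nat.strong_induction_on with
  | _ L ih =>
    intro hL
    have main : R L ≤ 6 - 6 * (1 / 2 : ℝ) ^ (Nat.clog 2 L) := by
      rcases eq_or_lt_of_le hL with h1 | h2
      · simp [← h1, hone]
      · have h2 : 2 ≤ L := h2
        have hM1 : 1 ≤ (L + 1) / 2 := Nat.one_le_div_iff (by norm_num) |>.mpr (by omega)
        have hMlt : (L + 1) / 2 < L := by omega
        have hclog : Nat.clog 2 L = Nat.clog 2 ((L + 1) / 2) + 1 := by
          rw [Nat.clog_of_two_le (by norm_num) h2]; norm_num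
        have hIH := (ih _ hMlt hM1).1
        have := hrec L h2
        rw [hclog]
        have : R L ≤ 3 + (1/2) * (6 - 6 * (1 / 2 : ℝ) ^ (Nat.clog 2 ((L + 1) / 2))) :=
          le_trans this (by nlinarith)
        calc R L ≤ _ := this
          _ = 6 - 6 * (1 / 2 : ℝ) ^ (Nat.clog 2 ((L + 1) / 2) + 1) := by ring
    refine ⟨main, lt_of_le_of_lt main ?_⟩
    have : (0:ℝ) < 6 * (1 / 2 : ℝ) ^ (Nat.clog 2 L) := by positivity
    linarith
end
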